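/- Let G be a finite connected multigraph without loop edges and with |E| ≥ |V|, and let p be the integer polynomial with θ_G(β, √−1) = (1 − β)^{|E|−|V|} p(β) for all complex β. Then p(1) equals the number of injective maps ψ : V → E such that for every i ∈ V the edge ψ(i) is incident to i; that is, ω_G(1) = #{ ψ : V → E : ψ injective and ψ(i) incident to i for all i }. -/
import Mathlib


/-- The polynomials `f_n` over ℂ defined by `f_0 = 1`, `f_1 = 0`,
`f_{n+1}(x) = x f_n(x) + f_{n-1}(x)`. -/
def chebFC : ℕ → ℂ → ℂ
  | 0, _ => 1
  | 1, _ => 0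
  | n + 2, x => x * chebFC (n + 1) x + chebFC n x

/-- `degM ep1 ep2 i s` is the degree of the node `i` in the multigraph edge
subset `s`; a loop at `i` counts twice. -/
def degM {V E : Type} [DecidableEq V] [DecidableEq E] (ep1 ep2 : E → V) (i : V)
    (s : Finset E) : ℕ :=
  (s.filter fun e => ep1 e = i).card + (s.filter fun e => ep2 e = i).card

/-- The multigraph polynomial `θ_G(β, ξ)` evaluated at `ξ = √-1`:
`θ_G(β, √-1) = Σ_{s ⊆ E} β^{|s|} Π_{i∈V} f_{d_i(s)}(√-1 - (√-1)⁻¹)`. -/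
noncomputable def thetaMI {V E : Type} [Fintype V] [DecidableEq V] [Fintype E] [DecidableEq E]
    (ep1 ep2 : E → V) (β : ℂ) : ℂ :=
  ∑ s : Finset E, β ^ s.card *
    ∏ i : V, chebFC (degM ep1 ep2 i s) (Complex.I - Complex.I⁻¹)

/-! ### Auxiliary material -/

lemma chebFC_twoI (n : ℕ) : chebFC n (2 * Complex.I) = (1 - (n : ℂ)) * Complex.I ^ n := by
  induction n using Nat.twoStepInduction with
  | zero => simp [chebFC]
  | one => simp [chebFC]
  | more n ih2 ih1 =>
    rw [chebFC, ih1, ih2]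
    push_cast
    ring_nf
    rw [Complex.I_sq]
    ring

section Aux
variable {V E : Type} [Fintype V] [DecidableEq V] [Fintype E] [DecidableEq E]
set_option linter.unusedSectionVars false

/-- handshake: sum of degrees is twice the number of edges -/
lemma sum_degM (ep1 ep2 : E → V) (s : Finset E) :
    ∑ i : V, degM ep1 ep2 i s = 2 * s.card := by
  unfold degM
  rw [Finset.sum_add_distrib, two_mul]
  congr 1 <;> exact (Finset.card_eq_sum_card_fiberwise (by simp)).symm

noncomputable def gfun (ep1 ep2 : E → V) (s : Finset E) (i : V) : Option E → ℂ
  | none => 1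
  | some e => if e ∈ s ∧ (ep1 e = i ∨ ep2 e = i) then -1 else 0

lemma one_sub_degM (ep1 ep2 : E → V) (hlf : ∀ e, ep1 e ≠ ep2 e) (s : Finset E) (i : V) :
    (1 : ℂ) - (degM ep1 ep2 i s : ℂ) = ∑ o : Option E, gfun ep1 ep2 s i o := by
  rw [Fintype.sum_option]
  have h1 : gfun ep1 ep2 s i none = 1 := rfl
  have h2 : ∀ e : E, gfun ep1 ep2 s i (some e)
      = if e ∈ s.filter (fun e => ep1 e = i ∨ ep2 e = i) then (-1 : ℂ) else 0 := by
    intro e; simp [gfun, Finset.mem_filter, and_comm]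
  rw [h1]
  have h3 : ∑ e : E, gfun ep1 ep2 s i (some e)
      = -((s.filter (fun e => ep1 e = i ∨ ep2 e = i)).card : ℂ) := by
    simp only [h2]
    rw [Finset.sum_ite_mem, Finset.univ_inter, Finset.sum_const]
    simp
  rw [h3]
  have h4 : (s.filter (fun e => ep1 e = i ∨ ep2 e = i)).card = degM ep1 ep2 i s := by
    unfold degM
    rw [Finset.filter_or, Finset.card_union_of_disjoint]
    rw [Finset.disjoint_filter]
    rintro e _ he1 he2
    exact hlf e (he1.trans he2.symm)
  rw [h4]; ring

def okPhi (ep1 ep2 : E → V) (φ : V → Option E) : Prop :=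
  ∀ i e, φ i = some e → ep1 e = i ∨ ep2 e = i

def Tset (φ : V → Option E) : Finset E := Finset.univ.biUnion fun i => (φ i).toFinset

def suppk (φ : V → Option E) : ℕ := (Finset.univ.filter fun i => (φ i).isSome).card

lemma Tset_subset_iff (φ : V → Option E) (s : Finset E) :
    Tset φ ⊆ s ↔ ∀ i e, φ i = some e → e ∈ s := by
  simp [Tset, Finset.biUnion_subset, Option.toFinset]
  constructor
  · intro h i e he
    have := h i
    rw [he] at this
    simpa using this
  · intro h i
    cases he : φ i with
    | none => simp
    | some e => simpa using h i e he

lemma card_Tset_le (φ : V → Option E) : (Tset φ).card ≤ suppk φ := by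
  refine (Finset.card_biUnion_le).trans ?_
  unfold suppk
  rw [Finset.card_filter]
  apply Finset.sum_le_sum
  intro i _
  cases φ i <;> simp

lemma suppk_le (φ : V → Option E) : suppk φ ≤ Fintype.card V :=
  (Finset.card_filter_le _ _).trans (by simp)

lemma prod_gfun_eq (ep1 ep2 : E → V) (s : Finset E) (φ : V → Option E)
    (hok : okPhi ep1 ep2 φ) (hsub : Tset φ ⊆ s) :
    ∏ i : V, gfun ep1 ep2 s i (φ i) = (-1 : ℂ) ^ suppk φ := by
  rw [Tset_subset_iff] at hsub
  unfold suppk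
  rw [← Finset.prod_filter_mul_prod_filter_not Finset.univ (fun i => (φ i).isSome)]
  have h1 : ∀ i ∈ Finset.univ.filter (fun i => (φ i).isSome), gfun ep1 ep2 s i (φ i) = -1 := by
    intro i hi
    simp only [Finset.mem_filter] at hi
    obtain ⟨e, he⟩ := Option.isSome_iff_exists.mp hi.2
    rw [he]
    simp [gfun, hsub i e he, hok i e he]
  have h2 : ∀ i ∈ Finset.univ.filter (fun i => ¬ (φ i).isSome), gfun ep1 ep2 s i (φ i) = 1 := by
    intro i hi
    simp only [Finset.mem_filter, Option.not_isSome_iff_eq_none] at hi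
    rw [hi.2]; rfl
  rw [Finset.prod_congr rfl h1, Finset.prod_congr rfl h2]
  simp

lemma prod_gfun_eq_zero_of_not_sub (ep1 ep2 : E → V) (s : Finset E) (φ : V → Option E)
    (hsub : ¬ Tset φ ⊆ s) :
    ∏ i : V, gfun ep1 ep2 s i (φ i) = 0 := by
  rw [Tset_subset_iff] at hsub
  push_neg at hsub
  obtain ⟨i, e, he, hes⟩ := hsub
  apply Finset.prod_eq_zero (Finset.mem_univ i)
  rw [he]
  simp [gfun, hes]

lemma prod_gfun_eq_zero_of_not_ok (ep1 ep2 : E → V) (s : Finset E) (φ : V → Option E)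
    (hok : ¬ okPhi ep1 ep2 φ) :
    ∏ i : V, gfun ep1 ep2 s i (φ i) = 0 := by
  unfold okPhi at hok
  push_neg at hok
  obtain ⟨i, e, he, hinc⟩ := hok
  apply Finset.prod_eq_zero (Finset.mem_univ i)
  rw [he]
  simp [gfun, hinc]

/-- geometric sum over supersets -/
lemma sum_supersets (T : Finset E) (x : ℂ) :
    ∑ s : Finset E, (if T ⊆ s then x ^ s.card else 0)
      = x ^ T.card * (x + 1) ^ (Fintype.card E - T.card) := by
  rw [Finset.sum_ite, Finset.sum_const_zero, add_zero]
  have hbij : ∑ s ∈ Finset.univ.filter (fun s => T ⊆ s), x ^ s.card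
      = ∑ u ∈ Tᶜ.powerset, x ^ (T.card + u.card) := by
    refine Finset.sum_nbij' (fun s => s \ T) (fun u => u ∪ T) ?_ ?_ ?_ ?_ ?_
    · intro s hs
      simp only [Finset.mem_filter] at hs
      simp only [Finset.mem_powerset]
      intro e he
      simp only [Finset.mem_sdiff] at he
      simp [Finset.mem_compl, he.2]
    · intro u hu
      simp only [Finset.mem_powerset] at hu
      simp only [Finset.mem_filter, Finset.mem_univ, true_and]
      exact Finset.subset_union_right
    · intro s hs
      simp only [Finset.mem_filter] at hs
      exact Finset.sdiff_union_of_subset hs.2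
    · intro u hu
      simp only [Finset.mem_powerset] at hu
      apply Finset.union_sdiff_cancel_right
      rw [Finset.disjoint_right]
      intro e heT heu
      exact (Finset.mem_compl.mp (hu heu)) heT
    · intro s hs
      simp only [Finset.mem_filter] at hs
      congr 1
      have := Finset.card_le_card hs.2
      rw [Finset.card_sdiff_of_subset hs.2]
      omega
  rw [hbij]
  have hpow : ∑ u ∈ Tᶜ.powerset, x ^ (T.card + u.card)
      = x ^ T.card * ∑ u ∈ Tᶜ.powerset, x ^ u.card := by
    rw [Finset.mul_sum]
    exact Finset.sum_congr rfl fun u _ => pow_add x _ _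
  rw [hpow]
  congr 1
  have := Finset.prod_add (fun _ : E => x) (fun _ : E => (1:ℂ)) Tᶜ
  simp only [Finset.prod_const, one_pow, mul_one] at this
  rw [← Finset.card_compl, this]

open Classical in
noncomputable def qpoly (ep1 ep2 : E → V) : Polynomial ℂ :=
  ∑ φ : V → Option E, if okPhi ep1 ep2 φ then
    Polynomial.C ((-1:ℂ)^(suppk φ)) * (-Polynomial.X)^((Tset φ).card) *
      (1 - Polynomial.X)^(Fintype.card V - (Tset φ).card) else 0

open Classical in
lemma qpoly_eval (ep1 ep2 : E → V) (β : ℂ) :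
    (qpoly ep1 ep2).eval β = ∑ φ : V → Option E, if okPhi ep1 ep2 φ then
      ((-1:ℂ)^(suppk φ)) * (-β)^((Tset φ).card) *
        (1 - β)^(Fintype.card V - (Tset φ).card) else 0 := by
  unfold qpoly
  rw [Polynomial.eval_finset_sum]
  refine Finset.sum_congr rfl fun φ _ => ?_
  split <;> simp

open Classical in
lemma theta_key (ep1 ep2 : E → V) (hlf : ∀ e, ep1 e ≠ ep2 e)
    (hcard : Fintype.card V ≤ Fintype.card E) (β : ℂ) :
    thetaMI ep1 ep2 β
      = (1 - β) ^ (Fintype.card E - Fintype.card V) * (qpoly ep1 ep2).eval β := by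
  have h2I : Complex.I - Complex.I⁻¹ = 2 * Complex.I := by
    rw [Complex.inv_I]; ring
  have step1 : ∀ s : Finset E,
      (β : ℂ) ^ s.card * ∏ i : V, chebFC (degM ep1 ep2 i s) (Complex.I - Complex.I⁻¹)
      = (-β) ^ s.card * ∏ i : V, ∑ o : Option E, gfun ep1 ep2 s i o := by
    intro s
    rw [h2I]
    have : ∏ i : V, chebFC (degM ep1 ep2 i s) (2 * Complex.I)
        = (-1 : ℂ) ^ s.card * ∏ i : V, ((1:ℂ) - (degM ep1 ep2 i s : ℂ)) := by
      calc ∏ i : V, chebFC (degM ep1 ep2 i s) (2 * Complex.I)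
          = ∏ i : V, ((1 - (degM ep1 ep2 i s : ℂ)) * Complex.I ^ (degM ep1 ep2 i s)) := by
            exact Finset.prod_congr rfl fun i _ => chebFC_twoI _
        _ = (∏ i : V, (1 - (degM ep1 ep2 i s : ℂ))) * ∏ i : V, Complex.I ^ (degM ep1 ep2 i s) := by
            rw [Finset.prod_mul_distrib]
        _ = (∏ i : V, (1 - (degM ep1 ep2 i s : ℂ))) * Complex.I ^ (2 * s.card) := by
            rw [Finset.prod_pow_eq_pow_sum, sum_degM]
        _ = (-1 : ℂ) ^ s.card * ∏ i : V, ((1:ℂ) - (degM ep1 ep2 i s : ℂ)) := by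
            rw [pow_mul, Complex.I_sq]; ring
    rw [this]
    rw [Finset.prod_congr rfl fun i _ => one_sub_degM ep1 ep2 hlf s i]
    rw [neg_pow β]
    ring
  unfold thetaMI
  rw [Finset.sum_congr rfl fun s _ => step1 s]
  have step2 : ∀ s : Finset E, ∏ i : V, ∑ o : Option E, gfun ep1 ep2 s i o
      = ∑ φ : V → Option E, ∏ i : V, gfun ep1 ep2 s i (φ i) := by
    intro s
    rw [Finset.prod_univ_sum]
    rw [Fintype.piFinset_univ]
  rw [Finset.sum_congr rfl fun s _ => by rw [step2 s]]
  simp_rw [Finset.mul_sum]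
  rw [Finset.sum_comm]
  rw [qpoly_eval, Finset.mul_sum]
  refine Finset.sum_congr rfl fun φ _ => ?_
  by_cases hok : okPhi ep1 ep2 φ
  · have hin : ∀ s : Finset E, (-β) ^ s.card * ∏ i : V, gfun ep1 ep2 s i (φ i)
        = (-1:ℂ) ^ suppk φ * (if Tset φ ⊆ s then (-β) ^ s.card else 0) := by
      intro s
      by_cases hs : Tset φ ⊆ s
      · rw [prod_gfun_eq ep1 ep2 s φ hok hs, if_pos hs]; ring
      · rw [prod_gfun_eq_zero_of_not_sub ep1 ep2 s φ hs, if_neg hs]; ring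
    rw [Finset.sum_congr rfl fun s _ => hin s, ← Finset.mul_sum, sum_supersets]
    rw [if_pos hok]
    have h1 : (-β) + 1 = 1 - β := by ring
    rw [h1]
    have h2 : Fintype.card E - (Tset φ).card
        = (Fintype.card E - Fintype.card V) + (Fintype.card V - (Tset φ).card) := by
      have := (card_Tset_le φ).trans (suppk_le φ)
      omega
    rw [h2, pow_add]
    ring
  · rw [if_neg hok]
    rw [Finset.sum_congr rfl fun s _ => by
      rw [prod_gfun_eq_zero_of_not_ok ep1 ep2 s φ hok, mul_zero]]
    simp

lemma Tset_some (ψ : V → E) : Tset (fun i => some (ψ i)) = Finset.univ.image ψ := by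
  ext e
  simp [Tset, eq_comm]

open Classical in
lemma qpoly_eval_one (ep1 ep2 : E → V) :
    (qpoly ep1 ep2).eval 1 =
      ((Finset.univ.filter fun φ : V → Option E =>
        okPhi ep1 ep2 φ ∧ (Tset φ).card = Fintype.card V).card : ℂ) := by
  rw [qpoly_eval]
  rw [← Finset.sum_boole]
  refine Finset.sum_congr rfl fun φ _ => ?_
  by_cases hok : okPhi ep1 ep2 φ
  · rw [if_pos hok]
    by_cases hT : (Tset φ).card = Fintype.card V
    · rw [if_pos ⟨hok, hT⟩]
      have hk : suppk φ = Fintype.card V :=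
        le_antisymm (suppk_le φ) (hT ▸ card_Tset_le φ)
      rw [hT, hk]
      simp only [sub_self, Nat.sub_self, pow_zero, mul_one]
      rw [← mul_pow]
      norm_num
    · rw [if_neg (by tauto)]
      have hlt : (Tset φ).card < Fintype.card V :=
        lt_of_le_of_ne ((card_Tset_le φ).trans (suppk_le φ)) hT
      rw [sub_self, zero_pow (by omega)]
      ring
  · rw [if_neg hok, if_neg (by tauto)]

open Classical in
lemma count_eq (ep1 ep2 : E → V) :
    (Finset.univ.filter fun φ : V → Option E =>
        okPhi ep1 ep2 φ ∧ (Tset φ).card = Fintype.card V).card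
      = Nat.card {ψ : V → E // Function.Injective ψ ∧
          ∀ i : V, ep1 (ψ i) = i ∨ ep2 (ψ i) = i} := by
  rw [Nat.card_eq_fintype_card, Fintype.card_subtype]
  symm
  refine Finset.card_bij (fun ψ _ => fun i => some (ψ i)) ?_ ?_ ?_
  · intro ψ hψ
    simp only [Finset.mem_filter, Finset.mem_univ, true_and] at hψ ⊢
    constructor
    · intro i e he
      rw [Option.some_inj] at he
      subst he
      exact hψ.2 i
    · rw [Tset_some, Finset.card_image_of_injective _ hψ.1, Finset.card_univ]
  · intro ψ1 h1 ψ2 h2 heq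
    funext i
    have := congrFun heq i
    simpa using this
  · intro φ hφ
    simp only [Finset.mem_filter, Finset.mem_univ, true_and] at hφ
    obtain ⟨hok, hT⟩ := hφ
    have hk : suppk φ = Fintype.card V :=
      le_antisymm (suppk_le φ) (hT ▸ card_Tset_le φ)
    have hall : ∀ i, (φ i).isSome := by
      intro i
      have huniv : (Finset.univ.filter fun i => (φ i).isSome) = Finset.univ :=
        Finset.eq_univ_of_card _ hk
      rw [Finset.eq_univ_iff_forall] at huniv
      have := huniv i
      simpa using this
    refine ⟨fun i => (φ i).get (hall i), ?_, ?_⟩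
    · simp only [Finset.mem_filter, Finset.mem_univ, true_and]
      have hφeq : φ = fun i => some ((φ i).get (hall i)) := by
        funext i; simp
      constructor
      · rw [hφeq, Tset_some] at hT
        have : Set.InjOn (fun i => (φ i).get (hall i)) (Finset.univ : Finset V) := by
          rw [← Finset.card_image_iff]
          rw [hT, Finset.card_univ]
        rw [Finset.coe_univ] at this
        exact fun a b hab => this (Set.mem_univ a) (Set.mem_univ b) hab
      · intro i
        exact hok i _ (by simp)
    · funext i; simp

lemma qpoly_eval_one' (ep1 ep2 : E → V) :
    (qpoly ep1 ep2).eval 1 = ((Nat.card {ψ : V → E // Function.Injective ψ ∧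
          ∀ i : V, ep1 (ψ i) = i ∨ ep2 (ψ i) = i}) : ℂ) := by
  rw [qpoly_eval_one, count_eq]

end Aux

theorem stmt_16 {V E : Type} [Fintype V] [DecidableEq V] [Fintype E] [DecidableEq E]
    -- a finite connected multigraph without loop edges and with `|E| ≥ |V|`
    (ep1 ep2 : E → V)
    (hloopfree : ∀ e, ep1 e ≠ ep2 e)
    (hconn : (SimpleGraph.fromRel fun a b => ∃ e, ep1 e = a ∧ ep2 e = b).Connected)
    (hcard : Fintype.card V ≤ Fintype.card E)
    -- the integer polynomial `p` with `θ_G(β, √-1) = (1-β)^{|E|-|V|} p(β)`,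
    -- i.e. `ω_G = p`
    (p : Polynomial ℤ)
    (hp : ∀ β : ℂ, thetaMI ep1 ep2 β =
      (1 - β) ^ (Fintype.card E - Fintype.card V) * Polynomial.aeval β p) :
    p.eval 1 =
      (Nat.card {ψ : V → E // Function.Injective ψ ∧
        ∀ i : V, ep1 (ψ i) = i ∨ ep2 (ψ i) = i} : ℤ) := by
  have hmap : p.map (algebraMap ℤ ℂ) = qpoly ep1 ep2 := by
    apply Polynomial.eq_of_infinite_eval_eq
    apply Set.Infinite.mono (s := ({(1 : ℂ)}ᶜ : Set ℂ))
    · intro β hβ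
      have hne : (1 : ℂ) - β ≠ 0 := by
        intro h
        apply hβ
        simp only [Set.mem_singleton_iff]
        linear_combination -h
      have h1 := (hp β).symm.trans (theta_key ep1 ep2 hloopfree hcard β)
      have h2 := mul_left_cancel₀ (pow_ne_zero _ hne) h1
      simp only [Set.mem_setOf_eq, Polynomial.eval_map]
      rw [← Polynomial.aeval_def, h2]
    · exact (Set.finite_singleton (1 : ℂ)).infinite_compl
  have h3 : ((p.eval 1 : ℤ) : ℂ) = (qpoly ep1 ep2).eval 1 := by
    rw [← hmap, Polynomial.eval_one_map]
    simp
  rw [qpoly_eval_one'] at h3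
  exact_mod_cast h3
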